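/- Let S be the Cox ring of P^{n_1} × ... × P^{n_s}. Let M be a strongly multistable set of monomials of degree (a_1,...,a_s), and let 1 ≤ i ≤ s; if i ≥ 2 assume additionally that M is x_1,...,x_{i−1}-lex. Then M^{x_i lex} is strongly multistable. -/

import Mathlib

open MvPolynomial

namespace Gotzmann

/-- Variable index set for the Cox ring of `P^{n 0} × ... × P^{n (s-1)}`:
the variable `x_{i,j}` is `⟨i, j⟩`. -/
abbrev PPVar (s : ℕ) (n : Fin s → ℕ) : Type := Σ i : Fin s, Fin (n i + 1)

/-- The multidegree of the variable `x_{i,j}` is the standard basis vector `e_i ∈ ℤ^s` (here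
realised in `ℕ^s`). -/
def ppw (s : ℕ) (n : Fin s → ℕ) : PPVar s n → (Fin s → ℕ) :=
  fun v => Pi.single v.1 1

/-- Weighted degree of an exponent vector. -/
def wdeg {σ M : Type*} [AddCommMonoid M] (w : σ → M) (u : σ →₀ ℕ) : M :=
  u.sum fun v e => e • w v

/-- Multigraded Hilbert function of `S/I` in degree `b`: the dimension of the image of the
degree-`b` part of `S` in `S/I`. -/
noncomputable def hilb (k : Type*) [Field k] {σ M : Type*} [AddCommMonoid M]
    (w : σ → M) (I : Ideal (MvPolynomial σ k)) (b : M) : ℕ :=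
  Module.finrank k ((weightedHomogeneousSubmodule k w b).map
    (Ideal.Quotient.mkₐ k I).toLinearMap)

/-- An ideal homogeneous with respect to the grading by `w`. -/
def IsHomog {k : Type*} [Field k] {σ M : Type*} [AddCommMonoid M]
    (w : σ → M) (I : Ideal (MvPolynomial σ k)) : Prop :=
  ∃ G : Set (MvPolynomial σ k),
    (∀ f ∈ G, ∃ d : M, f.IsWeightedHomogeneous w d) ∧ I = Ideal.span G

/-- A monomial ideal. -/
def IsMonomialIdeal {k : Type*} [Field k] {σ : Type*} (I : Ideal (MvPolynomial σ k)) : Prop :=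
  ∃ A : Set (σ →₀ ℕ), I = Ideal.span ((fun u => (monomial u (1 : k))) '' A)

/-- Generated in degrees componentwise at most `a`. -/
def GenInDegLE {k : Type*} [Field k] {σ : Type*} {s : ℕ}
    (w : σ → (Fin s → ℕ)) (I : Ideal (MvPolynomial σ k)) (a : Fin s → ℕ) : Prop :=
  ∃ G : Set (MvPolynomial σ k), I = Ideal.span G ∧
    ∀ f ∈ G, ∃ d : Fin s → ℕ, f.IsWeightedHomogeneous w d ∧ ∀ i, d i ≤ a i

/-- Generated in degrees at most `a` for the standard grading. -/
def GenInDegLE1 {k : Type*} [Field k] {σ : Type*}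
    (I : Ideal (MvPolynomial σ k)) (a : ℕ) : Prop :=
  ∃ G : Set (MvPolynomial σ k), I = Ideal.span G ∧
    ∀ f ∈ G, ∃ d : ℕ, f.IsWeightedHomogeneous (fun _ : σ => (1 : ℕ)) d ∧ d ≤ a

/-- `P` is the (multigraded) Hilbert polynomial of `I`: it agrees with the Hilbert function
for all multidegrees sufficiently deep in `ℕ^s`. -/
def IsHilbPoly (k : Type*) [Field k] {σ : Type*} {s : ℕ}
    (w : σ → (Fin s → ℕ)) (I : Ideal (MvPolynomial σ k))
    (P : MvPolynomial (Fin s) ℚ) : Prop :=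
  ∃ N : ℕ, ∀ b : Fin s → ℕ, (∀ i, N ≤ b i) →
    eval (fun i => (b i : ℚ)) P = (hilb k w I b : ℚ)

/-- `P` is the Hilbert polynomial of the standard-graded ideal `I`. -/
def IsHilbPoly1 (k : Type*) [Field k] {σ : Type*}
    (I : Ideal (MvPolynomial σ k)) (P : Polynomial ℚ) : Prop :=
  ∃ N : ℕ, ∀ b : ℕ, N ≤ b →
    P.eval (b : ℚ) = (hilb k (fun _ : σ => (1 : ℕ)) I b : ℚ)

/-- Hilbert polynomial for a `ℤ^s`-graded ring, agreement deep in `ℕ^s ⊆ ℤ^s`. -/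
def IsHilbPolyZ (k : Type*) [Field k] {σ : Type*} {s : ℕ}
    (w : σ → (Fin s → ℤ)) (I : Ideal (MvPolynomial σ k))
    (P : MvPolynomial (Fin s) ℚ) : Prop :=
  ∃ N : ℕ, ∀ b : Fin s → ℕ, (∀ i, N ≤ b i) →
    eval (fun i => (b i : ℚ)) P = (hilb k w I (fun i => (b i : ℤ)) : ℚ)

/-- A strongly multistable (monomial) ideal. -/
def StronglyMultistable {k : Type*} [Field k] {s : ℕ} {n : Fin s → ℕ}
    (I : Ideal (MvPolynomial (PPVar s n) k)) : Prop :=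
  IsMonomialIdeal I ∧
    ∀ u : PPVar s n →₀ ℕ, (monomial u (1 : k)) ∈ I →
      ∀ (i : Fin s) (j j' : Fin (n i + 1)), j' < j → u ⟨i, j⟩ ≠ 0 →
        (monomial (u - Finsupp.single ⟨i, j⟩ 1 + Finsupp.single ⟨i, j'⟩ 1) (1 : k)) ∈ I

/-- A strongly multistable set of exponent vectors. -/
def StronglyMultistableSet {s : ℕ} {n : Fin s → ℕ} (M : Set (PPVar s n →₀ ℕ)) : Prop :=
  ∀ u ∈ M, ∀ (i : Fin s) (j j' : Fin (n i + 1)), j' < j → u ⟨i, j⟩ ≠ 0 →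
    u - Finsupp.single ⟨i, j⟩ 1 + Finsupp.single ⟨i, j'⟩ 1 ∈ M

/-- The part of an exponent vector supported on block `i`. -/
noncomputable def blockPart {s : ℕ} {n : Fin s → ℕ} (i : Fin s) (u : PPVar s n →₀ ℕ) :
    PPVar s n →₀ ℕ := u.filter fun v => v.1 = i

/-- The part of an exponent vector supported off block `i`. -/
noncomputable def offBlock {s : ℕ} {n : Fin s → ℕ} (i : Fin s) (u : PPVar s n →₀ ℕ) :
    PPVar s n →₀ ℕ := u.filter fun v => v.1 ≠ i

/-- Exponent vectors supported on block `i` of total degree `d`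
(monomials of degree `d·e_i`). -/
def blockMon {s : ℕ} {n : Fin s → ℕ} (i : Fin s) (d : ℕ) : Set (PPVar s n →₀ ℕ) :=
  {p | (∀ v ∈ p.support, v.1 = i) ∧ p.sum (fun _ e => e) = d}

/-- `blockLt i u v` : the block-`i` monomial of `v` is strictly larger than that of `u` in the
lexicographic order with `x_{i,0} ≻ x_{i,1} ≻ ⋯`. -/
def blockLt {s : ℕ} {n : Fin s → ℕ} (i : Fin s) (u v : PPVar s n →₀ ℕ) : Prop :=
  Pi.Lex (· < ·) (fun {_} => (· < ·)) (fun j => u ⟨i, j⟩) (fun j => v ⟨i, j⟩)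

/-- `M` is an `x_i`-lex set: replacing the block-`i` part of a member by any lexicographically
larger monomial of the same degree stays in `M`. -/
def IsXiLex {s : ℕ} {n : Fin s → ℕ} (i : Fin s) (M : Set (PPVar s n →₀ ℕ)) : Prop :=
  ∀ u ∈ M, ∀ p' : PPVar s n →₀ ℕ,
    (∀ v ∈ p'.support, v.1 = i) →
    p'.sum (fun _ e => e) = (blockPart i u).sum (fun _ e => e) →
    blockLt i (blockPart i u) p' →
    offBlock i u + p' ∈ M

/-- The initial lexsegment of size `c` among block-`i` monomials of degree `d`. -/
noncomputable def lexSeg {s : ℕ} {n : Fin s → ℕ} (i : Fin s) (d c : ℕ) :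
    Set (PPVar s n →₀ ℕ) :=
  {p ∈ blockMon i d | (blockMon (n := n) i d ∩ {p' | blockLt i p p'}).ncard < c}

/-- The operation `M ↦ M^{x_i lex}`: in each fibre over a fixed off-block-`i` part, replace the
set of block-`i` parts by the initial lexsegment of the same cardinality. -/
noncomputable def xiLexify {s : ℕ} {n : Fin s → ℕ} (i : Fin s)
    (M : Set (PPVar s n →₀ ℕ)) : Set (PPVar s n →₀ ℕ) :=
  {w | ∃ u ∈ M, offBlock i w = offBlock i u ∧
        blockPart i w ∈ lexSeg i ((blockPart i u).sum fun _ e => e)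
          ({p | p ∈ blockMon i ((blockPart i u).sum fun _ e => e) ∧
              offBlock i u + p ∈ M}).ncard}

/-- Successively apply `M ↦ M^{x_i lex}` for the first `t` blocks. -/
noncomputable def lexifyUpTo {s : ℕ} {n : Fin s → ℕ} (M : Set (PPVar s n →₀ ℕ)) :
    ℕ → Set (PPVar s n →₀ ℕ)
  | 0 => M
  | t + 1 => if h : t < s then xiLexify ⟨t, h⟩ (lexifyUpTo M t) else lexifyUpTo M t

/-- `M^{multilex} = M^{x_1 lex ⋯ x_s lex}`. -/
noncomputable def multilexify {s : ℕ} {n : Fin s → ℕ} (M : Set (PPVar s n →₀ ℕ)) :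
    Set (PPVar s n →₀ ℕ) := lexifyUpTo M s

/-- The exponent vectors of the monomials of `I` of multidegree `a`. -/
def monomialsOf {k : Type*} [Field k] {s : ℕ} {n : Fin s → ℕ}
    (I : Ideal (MvPolynomial (PPVar s n) k)) (a : Fin s → ℕ) : Set (PPVar s n →₀ ℕ) :=
  {u | wdeg (ppw s n) u = a ∧ (monomial u (1 : k)) ∈ I}

/-- A multilex (monomial) ideal. -/
def IsMultilexIdeal {k : Type*} [Field k] {s : ℕ} {n : Fin s → ℕ}
    (I : Ideal (MvPolynomial (PPVar s n) k)) : Prop :=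
  IsMonomialIdeal I ∧ ∀ (a : Fin s → ℕ) (i : Fin s), IsXiLex i (monomialsOf I a)

/-- `κ` encodes the `d`-th Macaulay representation of `α`:
`α = C(κ(d),d) + ⋯ + C(κ(1),1)` with `κ(d) > ⋯ > κ(1) ≥ 0`; here `κ j` is the paper's
`κ(j+1)`. -/
def IsMacaulayRep (d α : ℕ) (κ : Fin d → ℕ) : Prop :=
  StrictMono κ ∧ α = ∑ j : Fin d, Nat.choose (κ j) ((j : ℕ) + 1)

/-- The Macaulay bound `α^{⟨d⟩}`. -/
noncomputable def macaulayBound (d α : ℕ) : ℕ :=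
  letI := Classical.propDecidable (∃ κ : Fin d → ℕ, IsMacaulayRep d α κ)
  if h : ∃ κ : Fin d → ℕ, IsMacaulayRep d α κ
  then ∑ j : Fin d, Nat.choose (h.choose j + 1) ((j : ℕ) + 2)
  else 0

/-- Maximal growth of a Hilbert function in one direction: with
`H u = C(nv+u, nv)·q(u) + r(u)` the Euclidean division, `H (u+1) = C(nv+u+1,nv)·q(u) + r(u)^⟨u⟩`. -/
def growthStep (nv : ℕ) (H : ℕ → ℕ) (u : ℕ) : Prop :=
  H (u + 1) =
    (nv + u + 1).choose nv * (H u / (nv + u).choose nv)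
      + macaulayBound u (H u % (nv + u).choose nv)

/-- Hilbert polynomial for a `ℤ^s`-graded Cox ring, with agreement sufficiently far into the nef
cone, parameterised by nef classes `c i`. -/
def IsHilbPolyNef (k : Type*) [Field k] {σ : Type*} {s : ℕ}
    (w : σ → (Fin s → ℤ)) (c : Fin s → (Fin s → ℤ))
    (I : Ideal (MvPolynomial σ k)) (P : MvPolynomial (Fin s) ℚ) : Prop :=
  ∃ N : ℕ, ∀ b : Fin s → ℕ, (∀ i, N ≤ b i) →
    eval (fun j => ((∑ i, (b i : ℤ) * c i j : ℤ) : ℚ)) P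
      = (hilb k w I (fun j => ∑ i, (b i : ℤ) * c i j) : ℚ)

/-- The `ℤ²`-grading of the Cox ring of Kleinschmidt's Picard-rank-2 toric variety `X_d(a)`:
`deg z_i = (-a_i, 1)` for `1 ≤ i ≤ s`, `deg z_{s+1} = (0,1)`, `deg z_i = (1,0)` otherwise
(indices here are `0`-based). -/
def kw (d s : ℕ) (a : Fin s → ℕ) : Fin (d + 2) → (Fin 2 → ℤ) :=
  fun i => if h : (i : ℕ) < s then ![-(a ⟨i, h⟩ : ℤ), 1]
    else if (i : ℕ) = s then ![0, 1] else ![1, 0]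

section Aux

variable {s : ℕ} {n : Fin s → ℕ}

lemma blockLt_trans {i : Fin s} {p q r : PPVar s n →₀ ℕ}
    (h1 : blockLt i p q) (h2 : blockLt i q r) : blockLt i p r :=
  lt_trans (α := Lex (Fin (n i + 1) → ℕ)) h1 h2

lemma le_deg {p : PPVar s n →₀ ℕ} (v : PPVar s n) : p v ≤ p.sum (fun _ e => e) := by
  by_cases h : p v = 0
  · simp [h]
  · exact Finset.single_le_sum (fun _ _ => Nat.zero_le _) (Finsupp.mem_support_iff.2 h)

lemma blockMon_finite (i : Fin s) (d : ℕ) : (blockMon (n := n) i d).Finite := by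
  have hinj : Set.InjOn (fun p : PPVar s n →₀ ℕ => fun j : Fin (n i + 1) => p ⟨i, j⟩)
      (blockMon i d) := by
    intro p hp q hq h
    ext v
    obtain ⟨i', j⟩ := v
    by_cases hi : i' = i
    · subst hi; exact congrFun h j
    · have h1 : p ⟨i', j⟩ = 0 := by
        by_contra hc
        exact hi (hp.1 _ (Finsupp.mem_support_iff.2 hc))
      have h2 : q ⟨i', j⟩ = 0 := by
        by_contra hc
        exact hi (hq.1 _ (Finsupp.mem_support_iff.2 hc))
      rw [h1, h2]
  refine Set.Finite.of_finite_image (Set.Finite.subset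
    (Set.Finite.pi (fun _ : Fin (n i + 1) => Set.finite_Iic d)) ?_) hinj
  rintro f ⟨p, hp, rfl⟩
  intro j _
  exact hp.2 ▸ le_deg _

lemma lexSeg_closed {i : Fin s} {d c : ℕ} {p q : PPVar s n →₀ ℕ}
    (hp : p ∈ lexSeg (n := n) i d c) (hq : q ∈ blockMon i d) (hlt : blockLt i p q) :
    q ∈ lexSeg (n := n) i d c := by
  refine ⟨hq, lt_of_le_of_lt ?_ hp.2⟩
  refine Set.ncard_le_ncard ?_ ((blockMon_finite i d).subset Set.inter_subset_left)
  rintro r ⟨hr1, hr2⟩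
  exact ⟨hr1, blockLt_trans hlt hr2⟩

lemma lexSeg_mono_c {i : Fin s} {d c c' : ℕ} (hcc : c ≤ c') {p : PPVar s n →₀ ℕ}
    (hp : p ∈ lexSeg (n := n) i d c) : p ∈ lexSeg (n := n) i d c' :=
  ⟨hp.1, lt_of_lt_of_le hp.2 hcc⟩

lemma filter_exchange (P : PPVar s n → Prop) [DecidablePred P] (f : PPVar s n →₀ ℕ)
    (x y : PPVar s n) :
    (f - Finsupp.single x 1 + Finsupp.single y 1).filter P
      = f.filter P - (Finsupp.single x 1).filter P + (Finsupp.single y 1).filter P := by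
  ext z
  simp only [Finsupp.add_apply, Finsupp.tsub_apply, Finsupp.filter_apply]
  split_ifs <;> simp

lemma sum_exchange (p : PPVar s n →₀ ℕ) (x y : PPVar s n) (hx : p x ≠ 0) :
    (p - Finsupp.single x 1 + Finsupp.single y 1).sum (fun _ e => e)
      = p.sum (fun _ e => e) := by
  have h1 : 1 ≤ p x := Nat.one_le_iff_ne_zero.2 hx
  have hdecomp : p = (p - Finsupp.single x 1) + Finsupp.single x 1 := by
    ext z
    simp only [Finsupp.add_apply, Finsupp.tsub_apply, Finsupp.single_apply]
    by_cases hxz : x = z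
    · subst hxz; rw [if_pos rfl]; omega
    · rw [if_neg hxz]; omega
  have hadd : ∀ (f g : PPVar s n →₀ ℕ),
      (f + g).sum (fun _ e => e) = f.sum (fun _ e => e) + g.sum (fun _ e => e) :=
    fun f g => Finsupp.sum_add_index' (fun _ => rfl) (fun _ _ _ => rfl)
  have hsingle : ∀ z : PPVar s n, (Finsupp.single z (1 : ℕ)).sum (fun _ e => e) = 1 :=
    fun z => Finsupp.sum_single_index rfl
  rw [hadd, hsingle]
  conv_rhs => rw [hdecomp, hadd, hsingle]

lemma add_exchange (f g : PPVar s n →₀ ℕ) (x y : PPVar s n) (hx : f x ≠ 0) :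
    (f + g) - Finsupp.single x 1 + Finsupp.single y 1
      = (f - Finsupp.single x 1 + Finsupp.single y 1) + g := by
  have h1 : 1 ≤ f x := Nat.one_le_iff_ne_zero.2 hx
  ext z
  simp only [Finsupp.add_apply, Finsupp.tsub_apply, Finsupp.single_apply]
  by_cases hxz : x = z
  · subst hxz; rw [if_pos rfl]; split_ifs <;> omega
  · rw [if_neg hxz]; split_ifs <;> omega

lemma sigma_mk_ne {i : Fin s} {j l : Fin (n i + 1)} (h : j ≠ l) :
    (⟨i, j⟩ : PPVar s n) ≠ ⟨i, l⟩ :=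
  fun hc => h (eq_of_heq (Sigma.mk.inj_iff.1 hc).2)

end Aux

/-- **Lemma: `M^{x_i lex}` is strongly multistable.** If `M` is a strongly multistable set of
monomials of multidegree `a`, and (when `i ≥ 1`, `0`-based) `M` is additionally
`x_1,…,x_{i−1}`-lex — i.e. `x_{i'}`-lex for all `i' < i`, a vacuous condition when `i = 0` —
then `M^{x_i lex}` is strongly multistable. -/
theorem xiLexify_stronglyMultistable {s : ℕ} {n : Fin s → ℕ} (a : Fin s → ℕ)
    (M : Set (PPVar s n →₀ ℕ))
    (hdeg : ∀ u ∈ M, wdeg (ppw s n) u = a)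
    (hstab : StronglyMultistableSet M)
    (i : Fin s)
    (hlex : ∀ i' : Fin s, i' < i → IsXiLex i' M) :
    StronglyMultistableSet (xiLexify i M) := by
  rintro w ⟨u, huM, hoff, hseg⟩ i0 j j' hjj' hwnz
  by_cases hi0 : i0 = i
  · -- exchange within block `i`
    subst hi0
    have hoffx : ¬ ((fun v : PPVar s n => v.1 ≠ i0) ⟨i0, j⟩) := fun h => h rfl
    have hoffy : ¬ ((fun v : PPVar s n => v.1 ≠ i0) ⟨i0, j'⟩) := fun h => h rfl
    refine ⟨u, huM, ?_, ?_⟩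
    · show offBlock i0 _ = offBlock i0 u
      unfold offBlock
      rw [filter_exchange, Finsupp.filter_single_of_neg (fun v : PPVar s n => v.1 ≠ i0) hoffx,
        Finsupp.filter_single_of_neg (fun v : PPVar s n => v.1 ≠ i0) hoffy, tsub_zero, add_zero]
      exact hoff
    · have hbp : blockPart i0 (w - Finsupp.single (⟨i0, j⟩ : PPVar s n) 1 + Finsupp.single (⟨i0, j'⟩ : PPVar s n) 1)
          = blockPart i0 w - Finsupp.single (⟨i0, j⟩ : PPVar s n) 1 + Finsupp.single (⟨i0, j'⟩ : PPVar s n) 1 := by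
        unfold blockPart
        rw [filter_exchange, Finsupp.filter_single_of_pos (fun v : PPVar s n => v.1 = i0) (a := ⟨i0, j⟩) rfl,
          Finsupp.filter_single_of_pos (fun v : PPVar s n => v.1 = i0) (a := ⟨i0, j'⟩) rfl]
      have hpx : blockPart i0 w ⟨i0, j⟩ = w ⟨i0, j⟩ := by
        exact Finsupp.filter_apply_pos (fun v : PPVar s n => v.1 = i0) w rfl
      have hpnz : blockPart i0 w ⟨i0, j⟩ ≠ 0 := by rw [hpx]; exact hwnz
      rw [hbp]
      set p := blockPart i0 w with hpdef
      have hqapp : ∀ l : Fin (n i0 + 1),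
          ((p - Finsupp.single (⟨i0, j⟩ : PPVar s n) 1 + Finsupp.single (⟨i0, j'⟩ : PPVar s n) 1 : PPVar s n →₀ ℕ)) (⟨i0, l⟩ : PPVar s n)
          = p ⟨i0, l⟩ - (Finsupp.single (⟨i0, j⟩ : PPVar s n) 1) (⟨i0, l⟩ : PPVar s n)
            + (Finsupp.single (⟨i0, j'⟩ : PPVar s n) 1) ⟨i0, l⟩ := by
        intro l
        rw [Finsupp.add_apply, Finsupp.tsub_apply]
      have hqmon : p - Finsupp.single (⟨i0, j⟩ : PPVar s n) 1 + Finsupp.single (⟨i0, j'⟩ : PPVar s n) 1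
          ∈ blockMon i0 ((blockPart i0 u).sum fun _ e => e) := by
        constructor
        · intro v hv
          have hv' : ((p - Finsupp.single (⟨i0, j⟩ : PPVar s n) 1 + Finsupp.single (⟨i0, j'⟩ : PPVar s n) 1 : PPVar s n →₀ ℕ)) v ≠ 0 :=
            Finsupp.mem_support_iff.1 hv
          by_cases hvy : v = ⟨i0, j'⟩
          · rw [hvy]
          · have heq : ((p - Finsupp.single (⟨i0, j⟩ : PPVar s n) 1 + Finsupp.single (⟨i0, j'⟩ : PPVar s n) 1 : PPVar s n →₀ ℕ)) v
                = p v - (Finsupp.single (⟨i0, j⟩ : PPVar s n) 1) v := by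
              have hY : (Finsupp.single (⟨i0, j'⟩ : PPVar s n) 1) v = 0 :=
                Finsupp.single_eq_of_ne' (fun h => hvy h.symm)
              rw [Finsupp.add_apply, Finsupp.tsub_apply, hY, add_zero]
            have hpv : p v ≠ 0 := by
              intro h0
              apply hv'
              rw [heq, h0]
              exact Nat.zero_sub _
            exact hseg.1.1 v (Finsupp.mem_support_iff.2 hpv)
        · rw [sum_exchange p _ _ hpnz]
          exact hseg.1.2
      refine lexSeg_closed hseg hqmon ?_
      refine ⟨j', fun l hl => ?_, ?_⟩
      · have hne1 : (⟨i0, j⟩ : PPVar s n) ≠ ⟨i0, l⟩ := sigma_mk_ne (lt_trans hl hjj').ne'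
        have hne2 : (⟨i0, j'⟩ : PPVar s n) ≠ ⟨i0, l⟩ := sigma_mk_ne hl.ne'
        show p ⟨i0, l⟩ = ((p - Finsupp.single (⟨i0, j⟩ : PPVar s n) 1
          + Finsupp.single (⟨i0, j'⟩ : PPVar s n) 1 : PPVar s n →₀ ℕ)) ⟨i0, l⟩
        rw [hqapp l, Finsupp.single_eq_of_ne' hne1, Finsupp.single_eq_of_ne' hne2,
          tsub_zero, add_zero]
      · have hne1 : (⟨i0, j⟩ : PPVar s n) ≠ ⟨i0, j'⟩ := sigma_mk_ne hjj'.ne'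
        show p ⟨i0, j'⟩ < ((p - Finsupp.single (⟨i0, j⟩ : PPVar s n) 1
          + Finsupp.single (⟨i0, j'⟩ : PPVar s n) 1 : PPVar s n →₀ ℕ)) ⟨i0, j'⟩
        rw [hqapp j', Finsupp.single_eq_of_ne' hne1, Finsupp.single_eq_same, tsub_zero]
        omega
  · -- exchange off block `i`
    have hPx : ((⟨i0, j⟩ : PPVar s n).1 ≠ i) := hi0
    have hPy : ((⟨i0, j'⟩ : PPVar s n).1 ≠ i) := hi0
    have hwu : w ⟨i0, j⟩ = u ⟨i0, j⟩ := by
      have h := DFunLike.congr_fun hoff (⟨i0, j⟩ : PPVar s n)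
      unfold offBlock at h
      rwa [Finsupp.filter_apply_pos (fun v : PPVar s n => v.1 ≠ i) _ hPx, Finsupp.filter_apply_pos (fun v : PPVar s n => v.1 ≠ i) _ hPx] at h
    have hu0 : u ⟨i0, j⟩ ≠ 0 := hwu ▸ hwnz
    refine ⟨u - Finsupp.single (⟨i0, j⟩ : PPVar s n) 1 + Finsupp.single (⟨i0, j'⟩ : PPVar s n) 1,
      hstab u huM i0 j j' hjj' hu0, ?_, ?_⟩
    · show offBlock i _ = offBlock i _
      unfold offBlock
      rw [filter_exchange, filter_exchange, Finsupp.filter_single_of_pos (fun v : PPVar s n => v.1 ≠ i) hPx,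
        Finsupp.filter_single_of_pos (fun v : PPVar s n => v.1 ≠ i) hPy]
      unfold offBlock at hoff
      rw [hoff]
    · have hbpw : blockPart i (w - Finsupp.single (⟨i0, j⟩ : PPVar s n) 1 + Finsupp.single (⟨i0, j'⟩ : PPVar s n) 1)
          = blockPart i w := by
        unfold blockPart
        rw [filter_exchange, Finsupp.filter_single_of_neg (fun v : PPVar s n => v.1 = i) hPx,
          Finsupp.filter_single_of_neg (fun v : PPVar s n => v.1 = i) hPy, tsub_zero, add_zero]
      have hbpu : blockPart i (u - Finsupp.single (⟨i0, j⟩ : PPVar s n) 1 + Finsupp.single (⟨i0, j'⟩ : PPVar s n) 1)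
          = blockPart i u := by
        unfold blockPart
        rw [filter_exchange, Finsupp.filter_single_of_neg (fun v : PPVar s n => v.1 = i) hPx,
          Finsupp.filter_single_of_neg (fun v : PPVar s n => v.1 = i) hPy, tsub_zero, add_zero]
      have hOB : offBlock i (u - Finsupp.single (⟨i0, j⟩ : PPVar s n) 1 + Finsupp.single (⟨i0, j'⟩ : PPVar s n) 1)
          = offBlock i u - Finsupp.single (⟨i0, j⟩ : PPVar s n) 1 + Finsupp.single (⟨i0, j'⟩ : PPVar s n) 1 := by
        unfold offBlock
        rw [filter_exchange, Finsupp.filter_single_of_pos (fun v : PPVar s n => v.1 ≠ i) hPx,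
          Finsupp.filter_single_of_pos (fun v : PPVar s n => v.1 ≠ i) hPy]
      have hOx : offBlock i u ⟨i0, j⟩ = u ⟨i0, j⟩ := Finsupp.filter_apply_pos (fun v : PPVar s n => v.1 ≠ i) _ hPx
      have hOnz : offBlock i u ⟨i0, j⟩ ≠ 0 := by rw [hOx]; exact hu0
      rw [hbpw, hbpu]
      refine lexSeg_mono_c ?_ hseg
      refine Set.ncard_le_ncard ?_
        ((blockMon_finite i ((blockPart i u).sum fun _ e => e)).subset (fun p hp => hp.1))
      rintro p ⟨hp1, hp2⟩
      refine ⟨hp1, ?_⟩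
      have hnz2 : (offBlock i u + p) ⟨i0, j⟩ ≠ 0 := by
        intro h0
        rw [Finsupp.add_apply, hOx] at h0
        omega
      have hmem := hstab _ hp2 i0 j j' hjj' hnz2
      rw [add_exchange _ _ _ _ hOnz] at hmem
      rw [hOB]
      exact hmem
end Gotzmann
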